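/- Let R be a 2,3-torsion free unital alternative ring with nontrivial idempotent e1 satisfying conditions (1)-(3), and let D be a Lie multiplicative derivation of R. Then the diagonal part D(e1)_{11} + D(e1)_{22} of D(e1) lies in the center Z(R). -/

import Mathlib

/-- Peirce idempotents: `pe e1 0 = e1`, `pe e1 1 = 1 - e1`. -/
def pe {R : Type*} [NonAssocRing R] (e1 : R) : Fin 2 → R := ![e1, 1 - e1]

/-- Membership in the Peirce component `R_{ij} = e_i R e_j`. -/
def InP {R : Type*} [NonAssocRing R] (e1 : R) (i j : Fin 2) (x : R) : Prop :=
  ∃ r : R, x = pe e1 i * r * pe e1 j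

/-- Condition (1): `x_{ij} R_{ji} = 0 ⟹ x_{ij} = 0` for `i ≠ j`. -/
def Cond1 {R : Type*} [NonAssocRing R] (e1 : R) : Prop :=
  ∀ i j : Fin 2, i ≠ j → ∀ x : R, InP e1 i j x →
    (∀ y : R, InP e1 j i y → x * y = 0) → x = 0

/-- Condition (2): `x_{11} R_{12} = 0` or `R_{21} x_{11} = 0` implies `x_{11} = 0`. -/
def Cond2 {R : Type*} [NonAssocRing R] (e1 : R) : Prop :=
  ∀ x : R, InP e1 0 0 x →
    ((∀ y : R, InP e1 0 1 y → x * y = 0) ∨ (∀ y : R, InP e1 1 0 y → y * x = 0)) → x = 0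

/-- Condition (3): `R_{12} x_{22} = 0` or `x_{22} R_{21} = 0` implies `x_{22} = 0`. -/
def Cond3 {R : Type*} [NonAssocRing R] (e1 : R) : Prop :=
  ∀ x : R, InP e1 1 1 x →
    ((∀ y : R, InP e1 0 1 y → y * x = 0) ∨ (∀ y : R, InP e1 1 0 y → x * y = 0)) → x = 0

section AuxAlt

variable {R : Type*} [NonAssocRing R]



lemma myAltL (hA1 : ∀ x y : R, x*x*y = x*(x*y)) (p q r : R) :
    p*q*r + q*p*r = p*(q*r) + q*(p*r) := by
  have h := hA1 (p+q) r
  simp only [add_mul, mul_add] at h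
  linear_combination (norm := abel1) h - hA1 p r - hA1 q r

lemma myAltR (hA2 : ∀ x y : R, y*x*x = y*(x*x)) (p q r : R) :
    r*p*q + r*q*p = r*(p*q) + r*(q*p) := by
  have h := hA2 (p+q) r
  simp only [add_mul, mul_add] at h
  linear_combination (norm := abel1) h - hA2 p r - hA2 q r

lemma myFlexx (hA1 : ∀ x y : R, x*x*y = x*(x*y)) (hA2 : ∀ x y : R, y*x*x = y*(x*x))
    (p w : R) : p*w*p = p*(w*p) := by
  have l := myAltL hA1 p w p
  linear_combination (norm := abel1) l - hA2 p w

lemma myFlexm (hA1 : ∀ x y : R, x*x*y = x*(x*y)) (hA2 : ∀ x y : R, y*x*x = y*(x*x))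
    (p q : R) (hpq : p + q = 1) (w : R) : p*w*q = p*(w*q) := by
  have hq : q = 1 - p := eq_sub_of_add_eq' hpq
  rw [hq]
  simp only [mul_sub, mul_one]
  rw [myFlexx hA1 hA2 p w]

lemma idemL (hA1 : ∀ x y : R, x*x*y = x*(x*y)) (p : R) (hpp : p*p = p) (w : R) :
    p*(p*w) = p*w := by
  have h := hA1 p w; rw [hpp] at h; exact h.symm

lemma idemR (hA2 : ∀ x y : R, y*x*x = y*(x*x)) (p : R) (hpp : p*p = p) (w : R) :
    w*p*p = w*p := by
  have h := hA2 p w; rw [hpp] at h; exact h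

lemma myComplL (p q : R) (hpq : p + q = 1) (w : R) (h : p*w = w) : q*w = 0 := by
  rw [eq_sub_of_add_eq' hpq, sub_mul, one_mul, h, sub_self]

lemma myComplR (p q : R) (hpq : p + q = 1) (w : R) (h : w*p = w) : w*q = 0 := by
  rw [eq_sub_of_add_eq' hpq, mul_sub, mul_one, h, sub_self]

lemma myComplL' (p q : R) (hpq : p + q = 1) (w : R) (h : p*w = 0) : q*w = w := by
  rw [eq_sub_of_add_eq' hpq, sub_mul, one_mul, h, sub_zero]

lemma myComplR' (p q : R) (hpq : p + q = 1) (w : R) (h : w*p = 0) : w*q = w := by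
  rw [eq_sub_of_add_eq' hpq, mul_sub, mul_one, h, sub_zero]

lemma pmemL (hA1 : ∀ x y : R, x*x*y = x*(x*y)) (p s : R) (hpp : p*p = p)
    (hflex : ∀ w : R, p*w*s = p*(w*s)) (w : R) : p*(p*w*s) = p*w*s := by
  have h := hflex (p*w)
  rw [idemL hA1 p hpp w] at h
  exact h.symm

lemma hdec (p q : R) (hpq : p + q = 1) (b : R) :
    b = p*b*p + p*b*q + (q*b*p + q*b*q) := by
  rw [← mul_add, ← mul_add, hpq, mul_one, mul_one, ← add_mul, hpq, one_mul]


lemma zleft (hA1 : ∀ x y : R, x*x*y = x*(x*y)) (h2' : ∀ x : R, x + x = 0 → x = 0)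
    (p x y : R) (hpp : p*p = p) (h1 : p*x = x) (hx2 : x*p = x) (h3 : p*y = 0) :
    x*y = 0 := by
  have l := myAltL hA1 p x y
  rw [h1, hx2, h3, mul_zero] at l
  have l2 := hA1 p (x*y)
  rw [hpp] at l2
  have l3 : p*(x*y) = x*y + x*y := by linear_combination (norm := abel1) -l
  rw [l3, mul_add, l3] at l2
  exact h2' _ (by linear_combination (norm := abel1) -l2)

lemma zright (hA2 : ∀ x y : R, y*x*x = y*(x*x)) (h2' : ∀ x : R, x + x = 0 → x = 0)
    (p x y : R) (hpp : p*p = p) (h1 : x*p = 0) (h2 : p*y = y) (h3 : y*p = y) :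
    x*y = 0 := by
  have l := myAltR hA2 p y x
  rw [h1, zero_mul, h2, h3] at l
  have l2 := hA2 p (x*y)
  rw [hpp] at l2
  have l3 : x*y*p = x*y + x*y := by linear_combination (norm := abel1) l
  rw [l3, add_mul, l3] at l2
  exact h2' _ (by linear_combination (norm := abel1) l2)

lemma cla (hA1 : ∀ x y : R, x*x*y = x*(x*y)) (p x y : R)
    (h1 : p*x = x) (h2 : x*p = x) (h3 : p*y = y) : p*(x*y) = x*y := by
  have l := myAltL hA1 p x y
  rw [h1, h2, h3] at l
  linear_combination (norm := abel1) -l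

lemma clb (hA1 : ∀ x y : R, x*x*y = x*(x*y)) (p x y : R)
    (h1 : p*x = x) (h2 : x*p = 0) (h3 : p*y = 0) : p*(x*y) = x*y := by
  have l := myAltL hA1 p x y
  rw [h1, h2, zero_mul, h3, mul_zero] at l
  linear_combination (norm := abel1) -l

lemma clc (hA1 : ∀ x y : R, x*x*y = x*(x*y)) (p x y : R)
    (h1 : p*x = 0) (h2 : x*p = x) (h3 : p*y = 0) : p*(x*y) = x*y := by
  have l := myAltL hA1 p x y
  rw [h1, zero_mul, h2, h3, mul_zero] at l
  linear_combination (norm := abel1) -l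

lemma cra (hA2 : ∀ x y : R, y*x*x = y*(x*x)) (p x y : R)
    (h1 : y*p = y) (h2 : p*y = y) (h3 : x*p = x) : (x*y)*p = x*y := by
  have l := myAltR hA2 p y x
  rw [h3, h2, h1] at l
  linear_combination (norm := abel1) l

lemma crb (hA2 : ∀ x y : R, y*x*x = y*(x*x)) (p x y : R)
    (h1 : y*p = y) (h2 : p*y = 0) (h3 : x*p = 0) : (x*y)*p = x*y := by
  have l := myAltR hA2 p y x
  rw [h3, zero_mul, h2, mul_zero, h1] at l
  linear_combination (norm := abel1) l

lemma crc (hA2 : ∀ x y : R, y*x*x = y*(x*x)) (p x y : R)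
    (h1 : y*p = 0) (h2 : p*y = y) (h3 : x*p = 0) : (x*y)*p = x*y := by
  have l := myAltR hA2 p y x
  rw [h3, zero_mul, h2, h1, mul_zero] at l
  linear_combination (norm := abel1) l

section Es
variable (hA1 : ∀ x y : R, x*x*y = x*(x*y)) (hA2 : ∀ x y : R, y*x*x = y*(x*x))
  (h2' : ∀ x : R, x + x = 0 → x = 0)
  (p q : R) (hpp : p*p = p) (hqq : q*q = q) (hpq : p + q = 1)

include hA1 hA2 h2' hpp hqq hpq

lemma myE1 (b x : R) (hx1 : p*x = x) (hx2 : x*p = x) :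
    p*(b*x)*p = (p*b*p)*x := by
  have hqp : q + p = 1 := by rw [add_comm]; exact hpq
  have m11L : p*(p*b*p) = p*b*p := pmemL hA1 p p hpp (fun w => myFlexx hA1 hA2 p w) b
  have m11R : (p*b*p)*p = p*b*p := idemR hA2 p hpp (p*b)
  have m12R : (p*b*q)*q = p*b*q := idemR hA2 q hqq (p*b)
  have m21L : q*(q*b*p) = q*b*p := pmemL hA1 q p hqq (fun w => myFlexm hA1 hA2 q p hqp w) b
  have m21R : (q*b*p)*p = q*b*p := idemR hA2 p hpp (q*b)
  have m22R : (q*b*q)*q = q*b*q := idemR hA2 q hqq (q*b)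
  have z12R : (p*b*q)*p = 0 := myComplR q p hqp _ m12R
  have z21R : (q*b*p)*q = 0 := myComplR p q hpq _ m21R
  have z22R : (q*b*q)*p = 0 := myComplR q p hqp _ m22R
  have hxq : q*x = 0 := myComplL p q hpq x hx1
  have t12 : (p*b*q)*x = 0 := zright hA2 h2' p _ x hpp z12R hx1 hx2
  have t22 : (q*b*q)*x = 0 := zright hA2 h2' p _ x hpp z22R hx1 hx2
  have t21 : p*((q*b*p)*x) = 0 := by
    have w21 : q*((q*b*p)*x) = (q*b*p)*x := clb hA1 q _ x m21L z21R hxq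
    exact myComplL q p hqp _ w21
  have t11L : p*((p*b*p)*x) = (p*b*p)*x := cla hA1 p _ x m11L m11R hx1
  have t11R : ((p*b*p)*x)*p = (p*b*p)*x := cra hA2 p _ x hx2 hx1 m11R
  conv_lhs => rw [hdec p q hpq b]
  simp only [add_mul, mul_add]
  rw [t12, t22, t21, t11L, t11R]
  simp only [mul_zero, zero_mul, add_zero, zero_add]

lemma myE2 (b x : R) (hx1 : p*x = x) (hx2 : x*p = x) :
    p*(x*b)*p = x*(p*b*p) := by
  have hqp : q + p = 1 := by rw [add_comm]; exact hpq
  have m11L : p*(p*b*p) = p*b*p := pmemL hA1 p p hpp (fun w => myFlexx hA1 hA2 p w) b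
  have m11R : (p*b*p)*p = p*b*p := idemR hA2 p hpp (p*b)
  have m12L : p*(p*b*q) = p*b*q := pmemL hA1 p q hpp (fun w => myFlexm hA1 hA2 p q hpq w) b
  have m12R : (p*b*q)*q = p*b*q := idemR hA2 q hqq (p*b)
  have m21L : q*(q*b*p) = q*b*p := pmemL hA1 q p hqq (fun w => myFlexm hA1 hA2 q p hqp w) b
  have m22L : q*(q*b*q) = q*b*q := pmemL hA1 q q hqq (fun w => myFlexx hA1 hA2 q w) b
  have z12L : q*(p*b*q) = 0 := myComplL p q hpq _ m12L
  have z21L : p*(q*b*p) = 0 := myComplL q p hqp _ m21L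
  have z22L : p*(q*b*q) = 0 := myComplL q p hqp _ m22L
  have hxq2 : x*q = 0 := myComplR p q hpq x hx2
  have s21 : x*(q*b*p) = 0 := zleft hA1 h2' p x _ hpp hx1 hx2 z21L
  have s22 : x*(q*b*q) = 0 := zleft hA1 h2' p x _ hpp hx1 hx2 z22L
  have s12 : p*(x*(p*b*q))*p = 0 := by
    have w12 : (x*(p*b*q))*q = x*(p*b*q) := crb hA2 q x _ m12R z12L hxq2
    have w12' : (x*(p*b*q))*p = 0 := myComplR q p hqp _ w12
    rw [myFlexx hA1 hA2 p (x*(p*b*q)), w12', mul_zero]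
  have s11L : p*(x*(p*b*p)) = x*(p*b*p) := cla hA1 p x _ hx1 hx2 m11L
  have s11R : (x*(p*b*p))*p = x*(p*b*p) := cra hA2 p x _ m11R m11L hx2
  conv_lhs => rw [hdec p q hpq b]
  simp only [mul_add]
  rw [s21, s22]
  simp only [add_mul, mul_add, add_zero, mul_zero, zero_mul]
  rw [s11L, s11R]
  -- remaining: the s12 term
  rw [show p*(x*(p*b*q))*p = 0 from s12]
  simp only [add_zero, zero_add]

lemma myE3 (b x : R) (hx1 : p*x = x) (hx2 : x*p = 0) :
    p*(b*x)*q = (p*b*p)*x := by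
  have hqp : q + p = 1 := by rw [add_comm]; exact hpq
  have hqx : q*x = 0 := myComplL p q hpq x hx1
  have hxq : x*q = x := myComplR' p q hpq x hx2
  have m11L : p*(p*b*p) = p*b*p := pmemL hA1 p p hpp (fun w => myFlexx hA1 hA2 p w) b
  have m11R : (p*b*p)*p = p*b*p := idemR hA2 p hpp (p*b)
  have m12L : p*(p*b*q) = p*b*q := pmemL hA1 p q hpp (fun w => myFlexm hA1 hA2 p q hpq w) b
  have m12R : (p*b*q)*q = p*b*q := idemR hA2 q hqq (p*b)
  have m21L : q*(q*b*p) = q*b*p := pmemL hA1 q p hqq (fun w => myFlexm hA1 hA2 q p hqp w) b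
  have m21R : (q*b*p)*p = q*b*p := idemR hA2 p hpp (q*b)
  have m22L : q*(q*b*q) = q*b*q := pmemL hA1 q q hqq (fun w => myFlexx hA1 hA2 q w) b
  have m22R : (q*b*q)*q = q*b*q := idemR hA2 q hqq (q*b)
  have z11R : (p*b*p)*q = 0 := myComplR p q hpq _ m11R
  have z12L : q*(p*b*q) = 0 := myComplL p q hpq _ m12L
  have z21R : (q*b*p)*q = 0 := myComplR p q hpq _ m21R
  have t22 : (q*b*q)*x = 0 := zleft hA1 h2' q _ x hqq m22L m22R hqx
  have t12 : p*((p*b*q)*x)*q = 0 := by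
    have w : q*((p*b*q)*x) = (p*b*q)*x := clc hA1 q _ x z12L m12R hqx
    have w' : p*((p*b*q)*x) = 0 := myComplL q p hqp _ w
    rw [w', zero_mul]
  have t21 : p*((q*b*p)*x)*q = 0 := by
    have w : q*((q*b*p)*x) = (q*b*p)*x := clb hA1 q _ x m21L z21R hqx
    have w' : p*((q*b*p)*x) = 0 := myComplL q p hqp _ w
    rw [w', zero_mul]
  have t11L : p*((p*b*p)*x) = (p*b*p)*x := cla hA1 p _ x m11L m11R hx1
  have t11R : ((p*b*p)*x)*q = (p*b*p)*x := crb hA2 q _ x hxq hqx z11R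
  conv_lhs => rw [hdec p q hpq b]
  simp only [add_mul, mul_add]
  rw [t22, t12, t21, t11L, t11R]
  simp only [mul_zero, zero_mul, add_zero, zero_add]

lemma myE4 (b x : R) (hx1 : p*x = x) (hx2 : x*p = 0) :
    p*(x*b)*q = x*(q*b*q) := by
  have hqp : q + p = 1 := by rw [add_comm]; exact hpq
  have hqx : q*x = 0 := myComplL p q hpq x hx1
  have hxq : x*q = x := myComplR' p q hpq x hx2
  have m11L : p*(p*b*p) = p*b*p := pmemL hA1 p p hpp (fun w => myFlexx hA1 hA2 p w) b
  have m11R : (p*b*p)*p = p*b*p := idemR hA2 p hpp (p*b)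
  have m12L : p*(p*b*q) = p*b*q := pmemL hA1 p q hpp (fun w => myFlexm hA1 hA2 p q hpq w) b
  have m21L : q*(q*b*p) = q*b*p := pmemL hA1 q p hqq (fun w => myFlexm hA1 hA2 q p hqp w) b
  have m21R : (q*b*p)*p = q*b*p := idemR hA2 p hpp (q*b)
  have m22L : q*(q*b*q) = q*b*q := pmemL hA1 q q hqq (fun w => myFlexx hA1 hA2 q w) b
  have m22R : (q*b*q)*q = q*b*q := idemR hA2 q hqq (q*b)
  have z12L : q*(p*b*q) = 0 := myComplL p q hpq _ m12L
  have z21L : p*(q*b*p) = 0 := myComplL q p hqp _ m21L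
  have z22L : p*(q*b*q) = 0 := myComplL q p hqp _ m22L
  have s11 : x*(p*b*p) = 0 := zright hA2 h2' p x _ hpp hx2 m11L m11R
  have s12 : p*(x*(p*b*q))*q = 0 := by
    have w : q*(x*(p*b*q)) = x*(p*b*q) := clc hA1 q x _ hqx hxq z12L
    have w' : p*(x*(p*b*q)) = 0 := myComplL q p hqp _ w
    rw [w', zero_mul]
  have s21 : p*(x*(q*b*p))*q = 0 := by
    have w : (x*(q*b*p))*p = x*(q*b*p) := crb hA2 p x _ m21R z21L hx2
    have w' : (x*(q*b*p))*q = 0 := myComplR p q hpq _ w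
    rw [myFlexm hA1 hA2 p q hpq (x*(q*b*p)), w', mul_zero]
  have s22L : p*(x*(q*b*q)) = x*(q*b*q) := clb hA1 p x _ hx1 hx2 z22L
  have s22R : (x*(q*b*q))*q = x*(q*b*q) := cra hA2 q x _ m22R m22L hxq
  conv_lhs => rw [hdec p q hpq b]
  simp only [mul_add]
  rw [s11]
  simp only [add_mul, mul_add, mul_zero, zero_mul, add_zero, zero_add]
  rw [s22L, s22R]
  rw [show p*(x*(p*b*q))*q = 0 from s12, show p*(x*(q*b*p))*q = 0 from s21]
  simp only [add_zero, zero_add]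

end Es



end AuxAlt

/-- the diagonal part $D(e_1)_{11} + D(e_1)_{22}$ of $D(e_1)$ is central. -/
theorem diag_part_D_e1_central (R : Type*) [NonAssocRing R]
    (hAlt1 : ∀ x y : R, x * x * y = x * (x * y))
    (hAlt2 : ∀ x y : R, y * x * x = y * (x * x))
    (h2 : ∀ x : R, (2 : ℕ) • x = 0 → x = 0)
    (h3 : ∀ x : R, (3 : ℕ) • x = 0 → x = 0)
    (e1 : R) (he : e1 * e1 = e1) (he0 : e1 ≠ 0) (he1 : e1 ≠ 1)
    (hc1 : Cond1 e1) (hc2 : Cond2 e1) (hc3 : Cond3 e1)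
    (D : R → R)
    (hD : ∀ x y : R, D (x * y - y * x) =
      (D x * y - y * D x) + (x * D y - D y * x)) :
    e1 * D e1 * e1 + (1 - e1) * D e1 * (1 - e1) ∈ Set.center R := by
  set q : R := 1 - e1 with hqdef
  have hpq : e1 + q = 1 := by rw [hqdef]; abel
  have hqp : q + e1 = 1 := by rw [add_comm]; exact hpq
  have hqq : q * q = q := by
    rw [hqdef]
    simp only [mul_sub, sub_mul, mul_one, one_mul, he]
    abel
  have h2' : ∀ x : R, x + x = 0 → x = 0 := fun x hx => h2 x (by rw [two_smul]; exact hx)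
  have h3' : ∀ x : R, x + x + x = 0 → x = 0 := fun x hx =>
    h3 x (by rw [show (3:ℕ) = 2+1 from rfl, succ_nsmul, two_smul]; exact hx)
  have h0 : D 0 = 0 := by simpa using hD 0 0
  have flexE : ∀ w : R, e1*w*e1 = e1*(w*e1) := fun w => myFlexx hAlt1 hAlt2 e1 w
  have flexQ : ∀ w : R, q*w*q = q*(w*q) := fun w => myFlexx hAlt1 hAlt2 q w
  have flexEQ : ∀ w : R, e1*w*q = e1*(w*q) := fun w => myFlexm hAlt1 hAlt2 e1 q hpq w
  have flexQE : ∀ w : R, q*w*e1 = q*(w*e1) := fun w => myFlexm hAlt1 hAlt2 q e1 hqp w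
  -- Step B1 : [a11, R11] = 0
  have hB1 : ∀ x : R, e1*x = x → x*e1 = x → (e1*D e1*e1)*x = x*(e1*D e1*e1) := by
    intro x hx1 hx2
    have hb := hD e1 x
    rw [hx1, hx2, sub_self, h0] at hb
    have hb2 := congrArg (fun w => e1 * w * e1) hb
    simp only [mul_zero, zero_mul, mul_add, add_mul, mul_sub, sub_mul] at hb2
    rw [idemL hAlt1 e1 he (D x)] at hb2
    rw [← flexE (D x)] at hb2
    rw [idemR hAlt2 e1 he (e1*D x)] at hb2
    rw [myE1 hAlt1 hAlt2 h2' e1 q he hqq hpq (D e1) x hx1 hx2,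
        myE2 hAlt1 hAlt2 h2' e1 q he hqq hpq (D e1) x hx1 hx2] at hb2
    linear_combination (norm := abel1) -hb2
  -- Step B2 : [a22, R22] = 0
  have hB2 : ∀ x : R, e1*x = 0 → x*e1 = 0 → (q*D e1*q)*x = x*(q*D e1*q) := by
    intro x hx1 hx2
    have hqx : q*x = x := myComplL' e1 q hpq x hx1
    have hxq : x*q = x := myComplR' e1 q hpq x hx2
    have hb := hD e1 x
    rw [hx1, hx2, sub_zero, h0] at hb
    have hb2 := congrArg (fun w => q * w * q) hb
    simp only [mul_zero, zero_mul, mul_add, add_mul, mul_sub, sub_mul] at hb2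
    have c1 : q*(e1*D x) = 0 := myComplL e1 q hpq _ (idemL hAlt1 e1 he (D x))
    have c2 : q*(D x*e1)*q = 0 := by
      rw [← flexQE (D x)]
      exact myComplR e1 q hpq _ (idemR hAlt2 e1 he (q*D x))
    rw [c1, zero_mul, c2] at hb2
    rw [myE1 hAlt1 hAlt2 h2' q e1 hqq he hqp (D e1) x hqx hxq,
        myE2 hAlt1 hAlt2 h2' q e1 hqq he hqp (D e1) x hqx hxq] at hb2
    linear_combination (norm := abel1) -hb2
  -- Step C1 : a11 x12 = x12 a22
  have hC1 : ∀ x : R, e1*x = x → x*e1 = 0 → (e1*D e1*e1)*x = x*(q*D e1*q) := by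
    intro x hx1 hx2
    have hb := hD e1 x
    rw [hx1, hx2, sub_zero] at hb
    have hb2 := congrArg (fun w => e1 * w * q) hb
    simp only [mul_add, add_mul, mul_sub, sub_mul] at hb2
    rw [idemL hAlt1 e1 he (D x)] at hb2
    have c2 : e1*(D x*e1)*q = 0 := by
      rw [← flexE (D x)]
      exact myComplR e1 q hpq _ (idemR hAlt2 e1 he (e1*D x))
    rw [c2] at hb2
    rw [myE3 hAlt1 hAlt2 h2' e1 q he hqq hpq (D e1) x hx1 hx2,
        myE4 hAlt1 hAlt2 h2' e1 q he hqq hpq (D e1) x hx1 hx2] at hb2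
    linear_combination (norm := abel1) -hb2
  -- Step C2 : x21 a11 = a22 x21
  have hC2 : ∀ x : R, e1*x = 0 → x*e1 = x → x*(e1*D e1*e1) = (q*D e1*q)*x := by
    intro x hx1 hx2
    have hqx : q*x = x := myComplL' e1 q hpq x hx1
    have hxq : x*q = 0 := myComplR e1 q hpq x hx2
    have hb := hD x e1
    rw [hx1, hx2, sub_zero] at hb
    have hb2 := congrArg (fun w => q * w * e1) hb
    simp only [mul_add, add_mul, mul_sub, sub_mul] at hb2
    have c1 : q*(D x*e1)*e1 = q*D x*e1 := by
      rw [← flexQE (D x)]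
      exact idemR hAlt2 e1 he (q*D x)
    have c2 : q*(e1*D x) = 0 := myComplL e1 q hpq _ (idemL hAlt1 e1 he (D x))
    rw [c1, c2, zero_mul] at hb2
    rw [myE3 hAlt1 hAlt2 h2' q e1 hqq he hqp (D e1) x hqx hxq,
        myE4 hAlt1 hAlt2 h2' q e1 hqq he hqp (D e1) x hqx hxq] at hb2
    linear_combination (norm := abel1) -hb2
  -- z commutes with everything
  set z := e1 * D e1 * e1 + q * D e1 * q with hzdef
  have hcomm : ∀ r : R, z * r = r * z := by
    intro r
    rw [hzdef]
    have A1 : e1*(e1*r*e1) = e1*r*e1 := pmemL hAlt1 e1 e1 he flexE r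
    have A2 : (e1*r*e1)*e1 = e1*r*e1 := idemR hAlt2 e1 he (e1*r)
    have B1 : e1*(e1*r*q) = e1*r*q := pmemL hAlt1 e1 q he flexEQ r
    have B2 : (e1*r*q)*q = e1*r*q := idemR hAlt2 q hqq (e1*r)
    have C1 : q*(q*r*e1) = q*r*e1 := pmemL hAlt1 q e1 hqq flexQE r
    have C2 : (q*r*e1)*e1 = q*r*e1 := idemR hAlt2 e1 he (q*r)
    have D1 : q*(q*r*q) = q*r*q := pmemL hAlt1 q q hqq flexQ r
    have D2 : (q*r*q)*q = q*r*q := idemR hAlt2 q hqq (q*r)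
    have A2' : (e1*r*e1)*q = 0 := myComplR e1 q hpq _ A2
    have B1' : q*(e1*r*q) = 0 := myComplL e1 q hpq _ B1
    have B2' : (e1*r*q)*e1 = 0 := myComplR q e1 hqp _ B2
    have C1' : e1*(q*r*e1) = 0 := myComplL q e1 hqp _ C1
    have C2' : (q*r*e1)*q = 0 := myComplR e1 q hpq _ C2
    have D1' : e1*(q*r*q) = 0 := myComplL q e1 hqp _ D1
    have D2' : (q*r*q)*e1 = 0 := myComplR q e1 hqp _ D2
    have za1 : e1*(e1*D e1*e1) = e1*D e1*e1 := pmemL hAlt1 e1 e1 he flexE (D e1)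
    have za2 : (e1*D e1*e1)*e1 = e1*D e1*e1 := idemR hAlt2 e1 he (e1*D e1)
    have zb1 : q*(q*D e1*q) = q*D e1*q := pmemL hAlt1 q q hqq flexQ (D e1)
    have zb2 : (q*D e1*q)*q = q*D e1*q := idemR hAlt2 q hqq (q*D e1)
    have za2' : (e1*D e1*e1)*q = 0 := myComplR e1 q hpq _ za2
    have za1' : q*(e1*D e1*e1) = 0 := myComplL e1 q hpq _ za1
    have zb2' : (q*D e1*q)*e1 = 0 := myComplR q e1 hqp _ zb2
    have zb1' : e1*(q*D e1*q) = 0 := myComplL q e1 hqp _ zb1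
    have p1 : (e1*D e1*e1)*(q*r*e1) = 0 := zleft hAlt1 h2' e1 _ _ he za1 za2 C1'
    have p2 : (e1*D e1*e1)*(q*r*q) = 0 := zleft hAlt1 h2' e1 _ _ he za1 za2 D1'
    have p3 : (q*D e1*q)*(e1*r*e1) = 0 := zright hAlt2 h2' e1 _ _ he zb2' A1 A2
    have p4 : (q*D e1*q)*(e1*r*q) = 0 := zleft hAlt1 h2' q _ _ hqq zb1 zb2 B1'
    have p5 : (e1*r*e1)*(q*D e1*q) = 0 := zright hAlt2 h2' q _ _ hqq A2' zb1 zb2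
    have p6 : (e1*r*q)*(e1*D e1*e1) = 0 := zright hAlt2 h2' e1 _ _ he B2' za1 za2
    have p7 : (q*r*e1)*(q*D e1*q) = 0 := zright hAlt2 h2' q _ _ hqq C2' zb1 zb2
    have p8 : (q*r*q)*(e1*D e1*e1) = 0 := zleft hAlt1 h2' q _ _ hqq D1 D2 za1'
    have g1 : (e1*D e1*e1)*(e1*r*e1) = (e1*r*e1)*(e1*D e1*e1) := hB1 _ A1 A2
    have g2 : (q*D e1*q)*(q*r*q) = (q*r*q)*(q*D e1*q) := hB2 _ D1' D2'
    have g3 : (e1*D e1*e1)*(e1*r*q) = (e1*r*q)*(q*D e1*q) := hC1 _ B1 B2'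
    have g4 : (q*r*e1)*(e1*D e1*e1) = (q*D e1*q)*(q*r*e1) := hC2 _ C1' C2
    conv_lhs => rw [hdec e1 q hpq r]
    conv_rhs => rw [hdec e1 q hpq r]
    simp only [mul_add, add_mul]
    rw [p1, p2, p3, p4, p5, p6, p7, p8, g1, g2, g3, g4]
    abel
  -- z is in the associative nucleus via 3(x,y,z) = [xy,z] - x[y,z] - [x,z]y
  have hass3 : ∀ x y : R, x*y*z = x*(y*z) := by
    intro x y
    have s1 : x*z*y - x*(z*y) = -(x*y*z - x*(y*z)) := by
      have l := myAltR hAlt2 z y x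
      linear_combination (norm := abel1) l
    have s2 : z*x*y - z*(x*y) = -(x*z*y - x*(z*y)) := by
      have l := myAltL hAlt1 z x y
      linear_combination (norm := abel1) l
    have c1 := hcomm (x*y)
    have c2 : x*(z*y) = x*(y*z) := by rw [hcomm y]
    have c3 : z*x*y = x*z*y := by rw [hcomm x]
    have key : (x*y*z - x*(y*z)) + (x*y*z - x*(y*z)) + (x*y*z - x*(y*z)) = 0 := by
      linear_combination (norm := abel1) s1 + s1 - s2 - c1 + c2 + c3
    have hz := h3' _ key
    linear_combination (norm := abel1) hz
  have hmid : ∀ x y : R, x*z*y = x*(z*y) := by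
    intro x y
    have l := myAltR hAlt2 z y x
    linear_combination (norm := abel1) l - hass3 x y
  have hleft : ∀ x y : R, z*(x*y) = z*x*y := by
    intro x y
    have l := myAltL hAlt1 z x y
    linear_combination (norm := abel1) hmid x y - l
  rw [Set.mem_center_iff]
  exact ⟨hcomm, fun b c => hleft b c, fun a b => hass3 a b⟩
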